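/- Let ω be a fixed sink of a diffeomorphism f of a 3-manifold and Q a solid torus with ω ∈ f(Q) ⊂ int Q ⊂ W^s(ω). If D is a meridian disk of Q disjoint from f(Q) and whose interior is disjoint from ⋃_{n∈ℤ} f^n(∂Q), then int Q \ D contains a 3-ball B with f(Q) ⊂ B ⊂ int Q. -/

import Mathlib

open Set Filter Topology Metric Manifold
open scoped Pointwise

noncomputable section

/-- Euclidean model space. -/
abbrev E (n : ℕ) : Type := EuclideanSpace ℝ (Fin n)

/-- The representative of `φ : M → ℝ` in the preferred chart at `p`. -/
def chartRep (n : ℕ) {M : Type} [TopologicalSpace M] [ChartedSpace (E n) M]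
    (φ : M → ℝ) (p : M) : E n → ℝ :=
  φ ∘ (extChartAt (𝓡 n) p).symm

/-- `p` is a critical point of `φ`. -/
def IsCriticalPt (n : ℕ) {M : Type} [TopologicalSpace M] [ChartedSpace (E n) M]
    (φ : M → ℝ) (p : M) : Prop :=
  mfderiv (𝓡 n) 𝓘(ℝ) φ p = 0

/-- Hessian of `φ` at `p`, computed in the preferred chart. -/
def hess (n : ℕ) {M : Type} [TopologicalSpace M] [ChartedSpace (E n) M]
    (φ : M → ℝ) (p : M) : E n →L[ℝ] E n →L[ℝ] ℝ :=
  fderiv ℝ (fderiv ℝ (chartRep n φ p)) (extChartAt (𝓡 n) p p)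

def IsNondegCriticalPt (n : ℕ) {M : Type} [TopologicalSpace M] [ChartedSpace (E n) M]
    (φ : M → ℝ) (p : M) : Prop :=
  IsCriticalPt n φ p ∧ ∀ v : E n, v ≠ 0 → ∃ w : E n, hess n φ p v w ≠ 0

/-- Morse index of `φ` at `p`: maximal dimension of a subspace on which the Hessian
is negative definite. -/
def morseIndexAt (n : ℕ) {M : Type} [TopologicalSpace M] [ChartedSpace (E n) M]
    (φ : M → ℝ) (p : M) : ℕ :=
  sSup {k | ∃ S : Submodule ℝ (E n), Module.finrank ℝ S = k ∧
      ∀ v ∈ S, v ≠ 0 → hess n φ p v v < 0}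

/-- A Morse function: smooth, with all critical points nondegenerate. -/
def IsMorseFunction (n : ℕ) {M : Type} [TopologicalSpace M] [ChartedSpace (E n) M]
    (φ : M → ℝ) : Prop :=
  ContMDiff (𝓡 n) 𝓘(ℝ) (⊤ : ℕ∞) φ ∧ ∀ p : M, IsCriticalPt n φ p → IsNondegCriticalPt n φ p

def criticalSet (n : ℕ) {M : Type} [TopologicalSpace M] [ChartedSpace (E n) M]
    (φ : M → ℝ) : Set M :=
  {p | IsCriticalPt n φ p}


/-- The basin (stable set) of a point `ω` under a map `f`:
points whose forward orbit converges to `ω`. -/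
def basin {M : Type} [TopologicalSpace M] (f : M → M) (ω : M) : Set M :=
  {x | Filter.Tendsto (fun k => f^[k] x) Filter.atTop (nhds ω)}

/-- `ω` is an attracting fixed point (sink) of `f`. -/
def IsSink {M : Type} [TopologicalSpace M] (f : M → M) (ω : M) : Prop :=
  f ω = ω ∧ ∃ U ∈ nhds ω, f '' U ⊆ U ∧ U ⊆ basin f ω

/-- `B` is an embedded (closed) 3-ball, whose boundary sphere is its frontier. -/
def IsBall3 {M : Type} [TopologicalSpace M] (B : Set M) : Prop :=
  ∃ e : ↥(Metric.closedBall (0 : E 3) 1) ≃ₜ ↥B,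
    (fun p => (e p : M)) '' {p | ‖(p : E 3)‖ = 1} = frontier B

/-- `T` is an embedded solid torus `S¹ × D²`, whose boundary torus is its frontier. -/
def IsSolidTorus {M : Type} [TopologicalSpace M] (T : Set M) : Prop :=
  ∃ e : (Metric.sphere (0 : E 2) 1 × Metric.closedBall (0 : E 2) 1) ≃ₜ ↥T,
    (fun p => (e p : M)) '' {p | ‖(p.2 : E 2)‖ = 1} = frontier T

/-- `D` is an embedded (closed) 2-disc with boundary circle `∂D`. -/
def IsDisk2 {M : Type} [TopologicalSpace M] (D bdD : Set M) : Prop :=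
  ∃ e : ↥(Metric.closedBall (0 : E 2) 1) ≃ₜ ↥D,
    (fun p => (e p : M)) '' {p | ‖(p : E 2)‖ = 1} = bdD

/-- `D` is a meridian disk of the solid torus `T`: in some product structure
`T ≅ S¹ × D²` (compatible with the frontier), `D` is a fiber `{z} × D²`. -/
def IsMeridianDisk {M : Type} [TopologicalSpace M] (D T : Set M) : Prop :=
  ∃ e : (Metric.sphere (0 : E 2) 1 × Metric.closedBall (0 : E 2) 1) ≃ₜ ↥T,
    (fun p => (e p : M)) '' {p | ‖(p.2 : E 2)‖ = 1} = frontier T ∧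
    ∃ z : Metric.sphere (0 : E 2) 1, (fun p => (e p : M)) '' {p | p.1 = z} = D

/-- `f` is a (smooth) diffeomorphism of the manifold `M`, given as a homeomorphism
smooth in both directions. -/
def IsDiffeo (n : ℕ) {M : Type} [TopologicalSpace M] [ChartedSpace (E n) M]
    (f : M ≃ₜ M) : Prop :=
  ContMDiff (𝓡 n) (𝓡 n) (⊤ : ℕ∞) f ∧ ContMDiff (𝓡 n) (𝓡 n) (⊤ : ℕ∞) f.symm

/-- Restriction homeomorphism for nested subsets. -/
def homeoRestrict {X : Type*} [TopologicalSpace X] {s u : Set X} (h : u ⊆ s) :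
    ↥(Subtype.val ⁻¹' u : Set ↥s) ≃ₜ ↥u where
  toFun y := ⟨y.1.1, y.2⟩
  invFun x := ⟨⟨x.1, h x.2⟩, x.2⟩
  left_inv _ := rfl
  right_inv _ := rfl
  continuous_toFun :=
    Continuous.subtype_mk (continuous_subtype_val.comp continuous_subtype_val) _
  continuous_invFun :=
    Continuous.subtype_mk (Continuous.subtype_mk continuous_subtype_val _) _

/-- Any compact subset of the range of an open embedding of `ℝ³` is contained in an
embedded closed 3-ball inside that range. -/
lemma exists_ball3_of_openEmbedding {M : Type} [TopologicalSpace M] [T2Space M]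
    (ψ : E 3 → M) (hψ : Topology.IsOpenEmbedding ψ)
    (K : Set M) (hK : IsCompact K) (hKr : K ⊆ Set.range ψ) :
    ∃ B : Set M, IsBall3 B ∧ K ⊆ B ∧ B ⊆ Set.range ψ := by
  -- the preimage of `K` is compact
  have hK' : IsCompact (ψ ⁻¹' K) := by
    let g : E 3 ≃ₜ Set.range ψ := Topology.IsEmbedding.toHomeomorph (f := ψ) hψ.isEmbedding
    have h0 : IsCompact (Subtype.val ⁻¹' K : Set (Set.range ψ)) := by
      rw [Subtype.isCompact_iff, Subtype.image_preimage_coe,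
        Set.inter_eq_self_of_subset_right hKr]
      exact hK
    have h1 : ψ ⁻¹' K = g.symm '' (Subtype.val ⁻¹' K) := by
      rw [Homeomorph.image_symm]; rfl
    rw [h1]
    exact h0.image g.symm.continuous
  obtain ⟨r, hr⟩ := hK'.isBounded.subset_closedBall 0
  set R : ℝ := max r 1 with hRdef
  have hR : (0 : ℝ) < R := lt_of_lt_of_le one_pos (le_max_right r 1)
  have hrR : ψ ⁻¹' K ⊆ Metric.closedBall 0 R :=
    hr.trans (Metric.closedBall_subset_closedBall (le_max_left r 1))
  refine ⟨ψ '' Metric.closedBall 0 R, ?_, ?_, Set.image_subset_range _ _⟩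
  · -- it is a 3-ball
    set B := ψ '' Metric.closedBall 0 R with hB
    have hintB : interior B = ψ '' Metric.ball 0 R := by
      apply subset_antisymm
      · intro y hy
        have hyB : y ∈ B := interior_subset hy
        obtain ⟨x, hx, rfl⟩ := hyB
        have hopen : IsOpen (ψ ⁻¹' interior B) := isOpen_interior.preimage hψ.continuous
        have hsub : ψ ⁻¹' interior B ⊆ Metric.closedBall 0 R := by
          intro a ha
          have : ψ a ∈ B := interior_subset ha
          obtain ⟨b, hb, hab⟩ := this
          rwa [hψ.injective hab] at hb
        have : ψ ⁻¹' interior B ⊆ Metric.ball 0 R := by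
          rw [← interior_closedBall (0 : E 3) hR.ne']
          exact interior_maximal hsub hopen
        exact ⟨x, this hy, rfl⟩
      · exact interior_maximal (Set.image_mono Metric.ball_subset_closedBall)
          (hψ.isOpenMap _ Metric.isOpen_ball)
    have hBclosed : IsClosed B :=
      ((isCompact_closedBall 0 R).image hψ.continuous).isClosed
    have hfrB : frontier B = ψ '' Metric.sphere 0 R := by
      rw [hBclosed.frontier_eq, hintB, ← Set.image_diff hψ.injective,
        Metric.closedBall_diff_ball]
    -- build the homeomorphism
    let hsc : E 3 ≃ₜ E 3 := Homeomorph.smulOfNeZero R hR.ne'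
    have hscim : hsc '' Metric.closedBall 0 1 = Metric.closedBall 0 R := by
      have : hsc '' Metric.closedBall 0 1 = R • Metric.closedBall (0 : E 3) 1 := rfl
      rw [this, smul_closedBall R (0 : E 3) zero_le_one, smul_zero, Real.norm_eq_abs,
        abs_of_pos hR, mul_one]
    let e1 : ↥(Metric.closedBall (0 : E 3) 1) ≃ₜ ↥(Metric.closedBall (0 : E 3) R) :=
      (hsc.image _).trans (Homeomorph.setCongr hscim)
    let e2 : ↥(Metric.closedBall (0 : E 3) R) ≃ₜ ↥B :=
      (Topology.IsEmbedding.toHomeomorph (f := ψ ∘ Subtype.val)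
        (hψ.isEmbedding.comp Topology.IsEmbedding.subtypeVal)).trans
        (Homeomorph.setCongr (by rw [Set.range_comp, Subtype.range_coe]))
    refine ⟨e1.trans e2, ?_⟩
    have heval : (fun p : ↥(Metric.closedBall (0 : E 3) 1) => (((e1.trans e2) p : ↥B) : M))
        = fun p : ↥(Metric.closedBall (0 : E 3) 1) => ψ (R • (p : E 3)) := rfl
    rw [heval, hfrB]
    have h1 : (fun p : ↥(Metric.closedBall (0 : E 3) 1) => ψ (R • (p : E 3)))
        = ψ ∘ (fun x : E 3 => R • x) ∘ Subtype.val := rfl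
    rw [h1, Set.image_comp, Set.image_comp]
    have h2 : (Subtype.val '' {p : ↥(Metric.closedBall (0 : E 3) 1) | ‖(p : E 3)‖ = 1})
        = Metric.sphere (0 : E 3) 1 := by
      ext x
      constructor
      · rintro ⟨p, hp, rfl⟩
        simpa [mem_sphere_zero_iff_norm] using hp
      · intro hx
        exact ⟨⟨x, Metric.sphere_subset_closedBall hx⟩,
          by simpa [mem_sphere_zero_iff_norm] using hx, rfl⟩
    rw [h2, Set.image_smul, smul_sphere R (0 : E 3) zero_le_one, smul_zero,
      Real.norm_eq_abs, abs_of_pos hR, mul_one]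
  · -- it contains K
    intro y hy
    obtain ⟨x, rfl⟩ := hKr hy
    exact ⟨x, hrR hy, rfl⟩

/-- if ω is a fixed sink of a diffeomorphism f of a 3-manifold, Q a solid
torus with ω ∈ f(Q) ⊂ int Q ⊂ W^s(ω), and D a meridian disk of Q disjoint from f(Q)
whose interior misses ⋃ₙ f^n(∂Q) (n ∈ ℤ), then int Q \ D contains a 3-ball B with
f(Q) ⊂ B ⊂ int Q. -/
theorem stmt_6
    (M : Type) [TopologicalSpace M] [T2Space M]
    [ChartedSpace (E 3) M] [IsManifold (𝓡 3) ((⊤ : ℕ∞) : WithTop ℕ∞) M]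
    (f : M ≃ₜ M) (hf : IsDiffeo 3 f)
    (ω : M) (hω : IsSink f ω)
    (Q : Set M) (hQ : IsSolidTorus Q)
    (hωQ : ω ∈ f '' Q) (hQ1 : f '' Q ⊆ interior Q) (hQ2 : Q ⊆ basin f ω)
    (D : Set M) (hD : IsMeridianDisk D Q)
    (hDf : Disjoint D (f '' Q))
    (hDG : ∀ n : ℕ, Disjoint (D \ frontier Q) (f^[n] '' frontier Q) ∧
      Disjoint (D \ frontier Q) (f.symm^[n] '' frontier Q)) :
    ∃ B : Set M, IsBall3 B ∧ f '' Q ⊆ B ∧ B ⊆ interior Q ∧ B ⊆ interior Q \ D := by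
  classical
  obtain ⟨e, hfr, z, hzD⟩ := hD
  haveI : Fact (Module.finrank ℝ (E 2) = 1 + 1) := ⟨by simp⟩
  haveI : CompactSpace ↥(Metric.closedBall (0 : E 2) 1) :=
    isCompact_iff_compactSpace.mp (isCompact_closedBall _ _)
  set X := Metric.sphere (0 : E 2) 1 × Metric.closedBall (0 : E 2) 1 with hX
  set c : X → M := fun p => ((e p : ↥Q) : M) with hc
  have hc_cont : Continuous c := continuous_subtype_val.comp e.continuous
  have hc_emb : Topology.IsClosedEmbedding c :=
    hc_cont.isClosedEmbedding fun a b h => e.injective (Subtype.val_injective h)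
  have hQrange : Q = Set.range c := by
    rw [show c = Subtype.val ∘ e from rfl, Set.range_comp, Homeomorph.range_coe,
      Set.image_univ, Subtype.range_coe]
  have hQcomp : IsCompact Q := hQrange ▸ (isCompact_range hc_cont)
  have hQclosed : IsClosed Q := hQcomp.isClosed
  have hIntQ : interior Q = c '' {p : X | ‖(p.2 : E 2)‖ < 1} := by
    have h2 : interior Q = Q \ frontier Q := by
      rw [hQclosed.frontier_eq, Set.diff_diff_cancel_left interior_subset]
    have hset : (Set.univ \ {p : X | ‖(p.2 : E 2)‖ = 1}) = {p : X | ‖(p.2 : E 2)‖ < 1} := by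
      ext p
      simp only [Set.mem_diff, Set.mem_univ, true_and, Set.mem_setOf_eq]
      constructor
      · intro h
        exact lt_of_le_of_ne (mem_closedBall_zero_iff.mp p.2.2) h
      · intro h
        exact ne_of_lt h
    rw [h2, ← hfr, hQrange, ← Set.image_univ, ← Set.image_diff hc_emb.injective, hset]
  set S : Set X := {p : X | p.1 ≠ z ∧ ‖(p.2 : E 2)‖ < 1} with hS
  have hVS : interior Q \ D = c '' S := by
    have hset : ({p : X | ‖(p.2 : E 2)‖ < 1} \ {p : X | p.1 = z}) = S := by
      ext p
      simp only [Set.mem_diff, Set.mem_setOf_eq, hS]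
      tauto
    rw [hIntQ, ← hzD, ← Set.image_diff hc_emb.injective, hset]
  have hDclosed : IsClosed D := by
    rw [← hzD]
    exact (((isClosed_eq continuous_fst continuous_const).isCompact).image hc_cont).isClosed
  have hVopen : IsOpen (interior Q \ D) := isOpen_interior.sdiff hDclosed
  -- the homeomorphism from ℝ³ to int Q \ D
  let h2 : ↥({z}ᶜ : Set (Metric.sphere (0 : E 2) 1)) ≃ₜ E 1 :=
    (Homeomorph.setCongr (stereographic'_source z).symm).trans
      ((stereographic' 1 z).toHomeomorphSourceTarget.trans
        ((Homeomorph.setCongr (stereographic'_target z)).trans (Homeomorph.Set.univ _)))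
  let h4 : (E 1 × E 2) ≃ₜ E 3 :=
    (ContinuousLinearEquiv.ofFinrankEq
      (by simp [Module.finrank_prod]) : (E 1 × E 2) ≃L[ℝ] E 3).toHomeomorph
  have hSprod : S = ({z}ᶜ : Set (Metric.sphere (0 : E 2) 1)) ×ˢ
      (Subtype.val ⁻¹' Metric.ball (0 : E 2) 1) := by
    ext p
    rw [Set.mem_prod]
    simp [hS, mem_ball_zero_iff]
  let homeoSV : ↥S ≃ₜ ↥(interior Q \ D) :=
    (Topology.IsEmbedding.toHomeomorph (f := c ∘ Subtype.val)
      (hc_emb.isEmbedding.comp Topology.IsEmbedding.subtypeVal)).trans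
      (Homeomorph.setCongr (by rw [Set.range_comp, Subtype.range_coe, ← hVS]))
  let bigH : E 3 ≃ₜ ↥(interior Q \ D) :=
    h4.symm.trans ((h2.symm.prodCongr
      (Homeomorph.unitBall.trans (homeoRestrict Metric.ball_subset_closedBall).symm)).trans
      ((Homeomorph.Set.prod _ _).symm.trans
        ((Homeomorph.setCongr hSprod.symm).trans homeoSV)))
  set ψ : E 3 → M := fun x => ((bigH x : ↥(interior Q \ D)) : M) with hψdef
  have hψ : Topology.IsOpenEmbedding ψ :=
    hVopen.isOpenEmbedding_subtypeVal.comp bigH.isOpenEmbedding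
  have hrange : Set.range ψ = interior Q \ D := by
    rw [show ψ = Subtype.val ∘ bigH from rfl, Set.range_comp, Homeomorph.range_coe,
      Set.image_univ, Subtype.range_coe]
  have hKcomp : IsCompact (f '' Q) := hQcomp.image f.continuous
  have hKr : f '' Q ⊆ Set.range ψ := by
    rw [hrange]
    intro y hy
    exact ⟨hQ1 hy, fun hd => Set.disjoint_left.mp hDf hd hy⟩
  obtain ⟨B, hB1, hB2, hB3⟩ := exists_ball3_of_openEmbedding ψ hψ (f '' Q) hKcomp hKr
  rw [hrange] at hB3
  exact ⟨B, hB1, hB2, hB3.trans Set.diff_subset, hB3⟩
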